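/- Let x = (a_1,...,a_n) and y = (b_1,...,b_n) be rook-monoid sequences with indices i < j such that b_i = a_j, b_j = a_i, b_j < b_i, and a_k = b_k for all k ∉ {i,j}. Then ℓ(y) = ℓ(x) + 1 if and only if for every s with i < s < j, either a_s > a_j or a_s < a_i. -/

import Mathlib

/-- coinv: number of pairs i < j with 0 < a i < a j. -/
def coinv (n : ℕ) (a : Fin n → ℕ) : ℕ :=
  (Finset.univ.filter (fun p : Fin n × Fin n => p.1 < p.2 ∧ 0 < a p.1 ∧ a p.1 < a p.2)).card

/-- Length of a rook-monoid sequence: ∑_{i : a_i ≠ 0} (a_i + n - i) - coinv (1-based i). -/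
def rookLen (n : ℕ) (a : Fin n → ℕ) : ℤ :=
  (∑ i : Fin n, if a i ≠ 0 then ((a i : ℤ) + n - (i.val + 1)) else 0) - coinv n a

/-- A rook-monoid sequence: entries in {0,...,n} with distinct nonzero entries. -/
def IsRook (n : ℕ) (a : Fin n → ℕ) : Prop :=
  (∀ i, a i ≤ n) ∧ ∀ i j : Fin n, i ≠ j → a i ≠ 0 → a i ≠ a j

/-- Non-increasing rearrangement of a list. -/
def sortDesc (l : List ℕ) : List ℕ := l.insertionSort (· ≥ ·)

/-- Containment order: entrywise comparison of non-increasing rearrangements. -/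
def contLE (l m : List ℕ) : Prop := List.Forall₂ (· ≤ ·) (sortDesc l) (sortDesc m)

/-- Deodhar order: containment of all truncations. -/
def deodharLE (n : ℕ) (x y : Fin n → ℕ) : Prop :=
  ∀ k : ℕ, k ≤ n → contLE ((List.ofFn x).take k) ((List.ofFn y).take k)

private lemma coinv_int (n : ℕ) (a : Fin n → ℕ) :
    (coinv n a : ℤ) = ∑ s : Fin n, ∑ t : Fin n,
      (if s < t ∧ 0 < a s ∧ a s < a t then (1:ℤ) else 0) := by
  rw [coinv, Finset.card_filter]
  push_cast
  rw [Fintype.sum_prod_type]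

private lemma sum_split (n : ℕ) (f : Fin n → ℤ) (i j : Fin n) (hij : i ≠ j) :
    ∑ s : Fin n, f s = f i + f j + ∑ s ∈ (Finset.univ.erase i).erase j, f s := by
  rw [← Finset.add_sum_erase _ f (Finset.mem_univ i),
      ← Finset.add_sum_erase _ f (Finset.mem_erase.mpr ⟨hij.symm, Finset.mem_univ j⟩)]
  ring

theorem covering_swap (n : ℕ) (a b : Fin n → ℕ) (ha : IsRook n a) (hb : IsRook n b)
    (i j : Fin n) (hij : i < j) (h1 : b i = a j) (h2 : b j = a i) (h3 : b j < b i)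
    (hne : ∀ k, k ≠ i → k ≠ j → a k = b k) :
    rookLen n b = rookLen n a + 1 ↔
      ∀ s : Fin n, i < s → s < j → (a j < a s ∨ a s < a i) := by
  classical
  have hji : i ≠ j := ne_of_lt hij
  have hij' : i.val < j.val := hij
  have haij : a i < a j := by rw [← h2, ← h1]; exact h3
  have haj0 : a j ≠ 0 := by omega
  set U : Finset (Fin n) := (Finset.univ.erase i).erase j with hUdef
  have hmemU : ∀ t : Fin n, t ∈ U → t ≠ i ∧ t ≠ j := by
    intro t ht
    simp only [hUdef, Finset.mem_erase, Finset.mem_univ, and_true] at ht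
    exact ⟨ht.2, ht.1⟩
  set H : Fin n → Fin n → ℤ := fun s t =>
    (if s < t ∧ 0 < b s ∧ b s < b t then (1:ℤ) else 0) -
    (if s < t ∧ 0 < a s ∧ a s < a t then (1:ℤ) else 0) with hH
  set wgt : Fin n → ℤ := fun t =>
    if a j < a t ∨ a t < a i then 0 else if a t = 0 then 1 else 2 with hwgt
  -- per-t computation
  have hG : ∀ t ∈ U, H i t + H j t + H t i + H t j =
      if i < t ∧ t < j then ((if a i = 0 then (1:ℤ) else 0) - wgt t) else 0 := by
    intro t ht
    obtain ⟨tni, tnj⟩ := hmemU t ht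
    have hbt : b t = a t := (hne t tni tnj).symm
    have hajt : a j ≠ a t := ha.2 j t (Ne.symm tnj) haj0
    rcases lt_trichotomy t i with h4 | h4 | h4
    · -- t < i
      have h5 : t < j := lt_trans h4 hij
      have h6 : ¬ i < t := not_lt.mpr h4.le
      have h7 : ¬ j < t := not_lt.mpr h5.le
      rw [if_neg (by tauto)]
      simp only [hH, h1, h2, hbt, h4, h5, h6, h7, true_and, false_and, if_false]
      split_ifs <;> omega
    · exact absurd h4 tni
    · rcases lt_trichotomy t j with h5 | h5 | h5
      · -- i < t < j : main case
        have h6 : ¬ t < i := not_lt.mpr h4.le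
        have h7 : ¬ j < t := not_lt.mpr h5.le
        rw [if_pos ⟨h4, h5⟩]
        simp only [hH, hwgt, h1, h2, hbt, h4, h5, h6, h7, true_and, false_and, if_false]
        rcases Nat.eq_zero_or_pos (a i) with h0 | h0
        · split_ifs <;> omega
        · have hait : a i ≠ a t := ha.2 i t (Ne.symm tni) (by omega)
          split_ifs <;> omega
      · exact absurd h5 tnj
      · -- j < t
        have h6 : ¬ t < i := not_lt.mpr (le_of_lt (lt_trans hij h5))
        have h7 : ¬ t < j := not_lt.mpr h5.le
        rw [if_neg (by tauto)]
        simp only [hH, h1, h2, hbt, h4, h5, h6, h7, true_and, false_and, if_false]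
        split_ifs <;> omega
  -- corner terms
  have hHii : H i i = 0 := by simp [hH]
  have hHjj : H j j = 0 := by simp [hH]
  have hHji : H j i = 0 := by
    have : ¬ j < i := not_lt.mpr hij.le
    simp [hH, this]
  have hHij : H i j = if a i = 0 then 0 else -1 := by
    simp only [hH, h1, h2, hij, true_and]
    rw [if_neg (by omega : ¬(0 < a j ∧ a j < a i))]
    rcases eq_or_ne (a i) 0 with h0 | h0
    · rw [if_neg (by omega), if_pos h0]; ring
    · rw [if_pos (by omega : 0 < a i ∧ a i < a j), if_neg h0]; ring
  -- coinv difference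
  have hCdiff : (coinv n b : ℤ) - (coinv n a : ℤ) =
      (if a i = 0 then 0 else -1) +
        ∑ t ∈ Finset.Ioo i j, ((if a i = 0 then (1:ℤ) else 0) - wgt t) := by
    have e1 : (coinv n b : ℤ) - (coinv n a : ℤ) = ∑ s : Fin n, ∑ t : Fin n, H s t := by
      simp only [hH]
      rw [coinv_int, coinv_int, ← Finset.sum_sub_distrib]
      exact Finset.sum_congr rfl (fun s _ => (Finset.sum_sub_distrib _ _).symm)
    have e2 : ∀ s ∈ U, (∑ t : Fin n, H s t) = H s i + H s j := by
      intro s hs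
      obtain ⟨sni, snj⟩ := hmemU s hs
      rw [sum_split n (H s) i j hji]
      have hz : ∑ t ∈ U, H s t = 0 := by
        apply Finset.sum_eq_zero
        intro t ht
        obtain ⟨tni, tnj⟩ := hmemU t ht
        simp only [hH, ← hne s sni snj, ← hne t tni tnj, sub_self]
      rw [hz]; ring
    rw [e1, sum_split n _ i j hji, sum_split n (H i) i j hji, sum_split n (H j) i j hji,
      Finset.sum_congr rfl e2, hHii, hHjj, hHji, hHij]
    have e3 : (∑ t ∈ U, H i t) + (∑ t ∈ U, H j t) + ∑ t ∈ U, (H t i + H t j)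
        = ∑ t ∈ U, (H i t + H j t + H t i + H t j) := by
      rw [← Finset.sum_add_distrib, ← Finset.sum_add_distrib]
      exact Finset.sum_congr rfl (fun t _ => by ring)
    have e4 : ∑ t ∈ U, (H i t + H j t + H t i + H t j)
        = ∑ t ∈ Finset.Ioo i j, ((if a i = 0 then (1:ℤ) else 0) - wgt t) := by
      rw [Finset.sum_congr rfl hG, ← Finset.sum_filter]
      congr 1
      ext t
      simp only [Finset.mem_filter, Finset.mem_Ioo, hUdef, Finset.mem_erase,
        Finset.mem_univ, and_true]
      constructor
      · rintro ⟨-, h⟩; exact h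
      · rintro ⟨ht1, ht2⟩; exact ⟨⟨ne_of_lt ht2, ne_of_gt ht1⟩, ht1, ht2⟩
    simp only [← hUdef]
    linarith [e3, e4]
  -- sum part
  have hS : ∀ c : Fin n → ℕ,
      (∑ k : Fin n, if c k ≠ 0 then ((c k : ℤ) + n - (k.val + 1)) else 0)
        = rookLen n c + coinv n c := by
    intro c; unfold rookLen; ring
  have hSdiff : rookLen n b + (coinv n b : ℤ) - (rookLen n a + (coinv n a : ℤ)) =
      if a i = 0 then ((j.val : ℤ) - (i.val : ℤ)) else 0 := by
    rw [← hS a, ← hS b, sum_split n _ i j hji, sum_split n _ i j hji]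
    have hUeq : (∑ k ∈ U, if b k ≠ 0 then ((b k : ℤ) + n - (k.val + 1)) else 0) =
        ∑ k ∈ U, if a k ≠ 0 then ((a k : ℤ) + n - (k.val + 1)) else 0 := by
      apply Finset.sum_congr rfl
      intro k hk
      obtain ⟨kni, knj⟩ := hmemU k hk
      rw [hne k kni knj]
    simp only [← hUdef]
    rw [hUeq, h1, h2, if_pos haj0, if_pos haj0]
    rcases eq_or_ne (a i) 0 with h0 | h0
    · rw [if_neg (fun hc => hc h0), if_neg (fun hc => hc h0), if_pos h0]; ring
    · rw [if_pos h0, if_pos h0, if_neg h0]; ring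
  -- the key identity
  have hcard : (((Finset.Ioo i j).card : ℕ) : ℤ) = (j.val : ℤ) - (i.val : ℤ) - 1 := by
    rw [Fin.card_Ioo]; omega
  have key : rookLen n b = rookLen n a + 1 + ∑ t ∈ Finset.Ioo i j, wgt t := by
    rcases eq_or_ne (a i) 0 with h0 | h0
    · simp only [h0, eq_self_iff_true, if_true] at hSdiff hCdiff
      rw [Finset.sum_sub_distrib, Finset.sum_const, nsmul_eq_mul, mul_one] at hCdiff
      linarith [hSdiff, hCdiff, hcard]
    · simp only [if_neg h0] at hSdiff hCdiff
      simp only [zero_sub, Finset.sum_neg_distrib] at hCdiff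
      linarith [hSdiff, hCdiff]
  -- conclude
  have hnn : ∀ t ∈ Finset.Ioo i j, 0 ≤ wgt t := by
    intro t _
    simp only [hwgt]
    split_ifs <;> norm_num
  constructor
  · intro h
    have hsum : ∑ t ∈ Finset.Ioo i j, wgt t = 0 := by rw [key] at h; linarith
    intro s hs1 hs2
    have hs : s ∈ Finset.Ioo i j := Finset.mem_Ioo.mpr ⟨hs1, hs2⟩
    have hw : wgt s = 0 := (Finset.sum_eq_zero_iff_of_nonneg hnn).mp hsum s hs
    by_contra hc
    simp only [hwgt, if_neg hc] at hw
    split_ifs at hw <;> norm_num at hw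
  · intro h
    have hz : ∑ t ∈ Finset.Ioo i j, wgt t = 0 := by
      apply Finset.sum_eq_zero
      intro t ht
      obtain ⟨ht1, ht2⟩ := Finset.mem_Ioo.mp ht
      simp only [hwgt, if_pos (h t ht1 ht2)]
    rw [key, hz, add_zero]
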